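/- For essentially bounded random variables X, Y, the operator δ(X) := M(X|𝓗) − m(X|𝓗) satisfies: (1) δ(λX) = |λ|·δ(X) P-a.s. for all real λ; (2) δ(X) − δ(Y) ≤ δ(X−Y) ≤ δ(X) + δ(Y) P-a.s.; (3) δ(X) = δ(X⁺) + δ(X⁻) P-a.s., where X⁺ = max(X,0) and X⁻ = max(−X,0). Moreover δ(X) ≥ 0 P-a.s., and δ(X) = 0 P-a.s. if and only if X agrees P-a.s. with an 𝓗-measurable random variable. -/

import Mathlib

open MeasureTheory Filter

/-- A real random variable is essentially bounded w.r.t. the measure `P`. -/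
def EssBdd {Ω : Type*} {F : MeasurableSpace Ω} (P : @Measure Ω F) (X : Ω → ℝ) : Prop :=
  ∃ C : ℝ, ∀ᵐ ω ∂P, |X ω| ≤ C

/-- `Y` is the conditional essential supremum `M(X|H)` of `X` given the sub-σ-algebra `H`:
`Y` is `H`-measurable, essentially bounded, `X ≤ Y` a.s., and `Y` is a.s. below every
`H`-measurable `Z` with `X ≤ Z` a.s. -/
def IsCondEssSup {Ω : Type*} {F : MeasurableSpace Ω} (P : @Measure Ω F)
    (H : MeasurableSpace Ω) (X Y : Ω → ℝ) : Prop :=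
  Measurable[H] Y ∧ EssBdd P Y ∧ (∀ᵐ ω ∂P, X ω ≤ Y ω) ∧
    ∀ Z : Ω → ℝ, Measurable[H] Z → (∀ᵐ ω ∂P, X ω ≤ Z ω) → ∀ᵐ ω ∂P, Y ω ≤ Z ω

/-- `Y` is the conditional essential infimum `m(X|H) = -M(-X|H)`. -/
def IsCondEssInf {Ω : Type*} {F : MeasurableSpace Ω} (P : @Measure Ω F)
    (H : MeasurableSpace Ω) (X Y : Ω → ℝ) : Prop :=
  IsCondEssSup P H (fun ω => -X ω) (fun ω => -Y ω)


section Helpers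

variable {Ω : Type*} {F : MeasurableSpace Ω} {P : @Measure Ω F} {H : MeasurableSpace Ω}

/-- A.e. uniqueness of the conditional essential supremum (allowing a.e. equal inputs). -/
lemma condEssSup_unique {X X' Y1 Y2 : Ω → ℝ} (hXX' : X =ᵐ[P] X')
    (h1 : IsCondEssSup P H X Y1) (h2 : IsCondEssSup P H X' Y2) : Y1 =ᵐ[P] Y2 := by
  have a : ∀ᵐ ω ∂P, Y1 ω ≤ Y2 ω := by
    refine h1.2.2.2 Y2 h2.1 ?_
    filter_upwards [hXX', h2.2.2.1] with ω he hle
    rw [he]; exact hle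
  have b : ∀ᵐ ω ∂P, Y2 ω ≤ Y1 ω := by
    refine h2.2.2.2 Y1 h1.1 ?_
    filter_upwards [hXX', h1.2.2.1] with ω he hle
    rw [← he]; exact hle
  filter_upwards [a, b] with ω ha hb
  linarith

/-- Positive scaling of conditional essential suprema. -/
lemma condEssSup_smul {X S : Ω → ℝ} {l : ℝ} (hl : 0 ≤ l) (hS : IsCondEssSup P H X S) :
    IsCondEssSup P H (fun ω => l * X ω) (fun ω => l * S ω) := by
  obtain ⟨hmeas, ⟨C, hC⟩, hle, hmin⟩ := hS
  refine ⟨measurable_const.mul hmeas, ⟨|l| * C, ?_⟩, ?_, ?_⟩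
  · filter_upwards [hC] with ω h
    rw [abs_mul]
    exact mul_le_mul_of_nonneg_left h (abs_nonneg l)
  · filter_upwards [hle] with ω h
    exact mul_le_mul_of_nonneg_left h hl
  · intro Z hZ hZle
    rcases eq_or_lt_of_le hl with rfl | hl'
    · filter_upwards [hZle] with ω h
      simpa using h
    · have hXZ : ∀ᵐ ω ∂P, X ω ≤ l⁻¹ * Z ω := by
        filter_upwards [hZle] with ω h
        exact (le_inv_mul_iff₀ hl').mpr h
      have h2 := hmin _ (measurable_const.mul hZ) hXZ
      filter_upwards [h2] with ω h
      calc l * S ω ≤ l * (l⁻¹ * Z ω) := mul_le_mul_of_nonneg_left h hl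
        _ = Z ω := by field_simp

/-- Positive part of conditional essential suprema. -/
lemma condEssSup_max {X S : Ω → ℝ} (hS : IsCondEssSup P H X S) :
    IsCondEssSup P H (fun ω => max (X ω) 0) (fun ω => max (S ω) 0) := by
  obtain ⟨hmeas, ⟨C, hC⟩, hle, hmin⟩ := hS
  refine ⟨hmeas.max measurable_const, ⟨C, ?_⟩, ?_, ?_⟩
  · filter_upwards [hC] with ω h
    rw [abs_of_nonneg (le_max_right _ _)]
    exact max_le ((le_abs_self _).trans h) ((abs_nonneg _).trans h)
  · filter_upwards [hle] with ω h
    exact max_le_max h le_rfl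
  · intro Z hZ hZle
    have hXZ : ∀ᵐ ω ∂P, X ω ≤ Z ω := by
      filter_upwards [hZle] with ω h
      exact le_trans (le_max_left _ _) h
    have h0Z : ∀ᵐ ω ∂P, (0:ℝ) ≤ Z ω := by
      filter_upwards [hZle] with ω h
      exact le_trans (le_max_right _ _) h
    have h2 := hmin Z hZ hXZ
    filter_upwards [h2, h0Z] with ω h h0
    exact max_le h h0

/-- Negative-truncation of conditional essential suprema (needs essential boundedness of `X`). -/
lemma condEssSup_min {X S : Ω → ℝ} (hX : EssBdd P X) (hS : IsCondEssSup P H X S) :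
    IsCondEssSup P H (fun ω => min (X ω) 0) (fun ω => min (S ω) 0) := by
  obtain ⟨C, hC⟩ := hX
  obtain ⟨hmeas, ⟨D, hD⟩, hle, hmin⟩ := hS
  refine ⟨hmeas.min measurable_const, ⟨D, ?_⟩, ?_, ?_⟩
  · filter_upwards [hD] with ω h
    have : |min (S ω) 0| ≤ |S ω| := by
      rcases le_total (S ω) 0 with hs | hs
      · rw [min_eq_left hs]
      · rw [min_eq_right hs]; simpa using abs_nonneg (S ω)
    exact this.trans h
  · filter_upwards [hle] with ω h
    exact min_le_min h le_rfl
  · intro Z hZ hZle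
    set Z' : Ω → ℝ := fun ω => if 0 ≤ Z ω then max (Z ω) C else Z ω with hZ'def
    have hZ'meas : Measurable[H] Z' :=
      Measurable.ite (measurableSet_le measurable_const hZ) (hZ.max measurable_const) hZ
    have hXZ' : ∀ᵐ ω ∂P, X ω ≤ Z' ω := by
      filter_upwards [hC, hZle] with ω h1 h2
      by_cases h : 0 ≤ Z ω
      · simp only [hZ'def, if_pos h]
        exact le_trans (le_abs_self _) (h1.trans (le_max_right _ _))
      · simp only [hZ'def, if_neg h]
        push_neg at h
        rcases le_total (X ω) 0 with hx | hx
        · rwa [min_eq_left hx] at h2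
        · rw [min_eq_right hx] at h2; linarith
    have hSZ' := hmin Z' hZ'meas hXZ'
    filter_upwards [hSZ'] with ω h
    by_cases h0 : 0 ≤ Z ω
    · exact le_trans (min_le_right _ _) h0
    · simp only [hZ'def, if_neg h0] at h
      exact le_trans (min_le_left _ _) h

end Helpers

/-- Properties of the operator `δ(X) := M(X|H) − m(X|H)`: absolute homogeneity, the
semi-norm inequalities, additivity over positive and negative parts, nonnegativity, and the
fact that `δ(X) = 0` a.s. iff `X` agrees a.s. with an `H`-measurable random variable. -/
theorem delta_semi_norm {Ω : Type*} [F : MeasurableSpace Ω]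
    (P : Measure Ω) [IsProbabilityMeasure P] (H : MeasurableSpace Ω) (hH : H ≤ F)
    (X Y MX mX MY mY MXY mXY Mp mp Mn mn : Ω → ℝ)
    (hX : EssBdd P X) (hY : EssBdd P Y)
    (hMX : IsCondEssSup P H X MX) (hmX : IsCondEssInf P H X mX)
    (hMY : IsCondEssSup P H Y MY) (hmY : IsCondEssInf P H Y mY)
    (ML mL : ℝ → Ω → ℝ)
    (hML : ∀ l : ℝ, IsCondEssSup P H (fun ω => l * X ω) (ML l))
    (hmL : ∀ l : ℝ, IsCondEssInf P H (fun ω => l * X ω) (mL l))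
    (hMXY : IsCondEssSup P H (fun ω => X ω - Y ω) MXY)
    (hmXY : IsCondEssInf P H (fun ω => X ω - Y ω) mXY)
    (hMp : IsCondEssSup P H (fun ω => max (X ω) 0) Mp)
    (hmp : IsCondEssInf P H (fun ω => max (X ω) 0) mp)
    (hMn : IsCondEssSup P H (fun ω => max (-X ω) 0) Mn)
    (hmn : IsCondEssInf P H (fun ω => max (-X ω) 0) mn) :
    (∀ l : ℝ, (fun ω => ML l ω - mL l ω) =ᵐ[P] fun ω => |l| * (MX ω - mX ω)) ∧
      (∀ᵐ ω ∂P, (MX ω - mX ω) - (MY ω - mY ω) ≤ MXY ω - mXY ω ∧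
        MXY ω - mXY ω ≤ (MX ω - mX ω) + (MY ω - mY ω)) ∧
      ((fun ω => MX ω - mX ω) =ᵐ[P] fun ω => (Mp ω - mp ω) + (Mn ω - mn ω)) ∧
      (∀ᵐ ω ∂P, 0 ≤ MX ω - mX ω) ∧
      (((fun ω => MX ω - mX ω) =ᵐ[P] fun _ => (0 : ℝ)) ↔
        ∃ Z : Ω → ℝ, Measurable[H] Z ∧ X =ᵐ[P] Z) := by
    -- Basic measurability facts
  have hmXmeas : Measurable[H] mX := by simpa [Pi.neg_def] using hmX.1.neg
  have hmYmeas : Measurable[H] mY := by simpa [Pi.neg_def] using hmY.1.neg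
  have hmXYmeas : Measurable[H] mXY := by simpa [Pi.neg_def] using hmXY.1.neg
  -- mX ≤ X ≤ MX a.s., mY ≤ Y ≤ MY a.s.
  have hXleMX : ∀ᵐ ω ∂P, X ω ≤ MX ω := hMX.2.2.1
  have hmXleX : ∀ᵐ ω ∂P, mX ω ≤ X ω := by
    filter_upwards [hmX.2.2.1] with ω h; linarith
  have hYleMY : ∀ᵐ ω ∂P, Y ω ≤ MY ω := hMY.2.2.1
  have hmYleY : ∀ᵐ ω ∂P, mY ω ≤ Y ω := by
    filter_upwards [hmY.2.2.1] with ω h; linarith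
  have hXneg : EssBdd P (fun ω => -X ω) := by
    obtain ⟨C, hC⟩ := hX
    exact ⟨C, by filter_upwards [hC] with ω h; rwa [abs_neg]⟩
  refine ⟨?_, ?_, ?_, ?_, ?_⟩
  · -- (1) homogeneity
    intro l
    rcases le_or_gt 0 l with hl | hl
    · have h1 : ML l =ᵐ[P] fun ω => l * MX ω :=
        condEssSup_unique (Eventually.of_forall fun ω => rfl) (hML l) (condEssSup_smul hl hMX)
      have h2 : (fun ω => -mL l ω) =ᵐ[P] fun ω => l * -mX ω :=
        condEssSup_unique (Eventually.of_forall fun ω => by ring) (hmL l) (condEssSup_smul hl hmX)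
      filter_upwards [h1, h2] with ω e1 e2
      rw [abs_of_nonneg hl]
      nlinarith [e1, e2]
    · have hl' : (0:ℝ) ≤ -l := by linarith
      have h1 : ML l =ᵐ[P] fun ω => -l * -X ω * 0 + (-l) * (-mX ω) := by
        have := condEssSup_unique (P := P)
          (Eventually.of_forall fun ω => by ring : (fun ω => l * X ω) =ᵐ[P] fun ω => -l * -X ω)
          (hML l) (condEssSup_smul hl' hmX)
        filter_upwards [this] with ω e
        rw [e]; ring
      have h2 : (fun ω => -mL l ω) =ᵐ[P] fun ω => -l * MX ω :=
        condEssSup_unique (Eventually.of_forall fun ω => by ring) (hmL l) (condEssSup_smul hl' hMX)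
      filter_upwards [h1, h2] with ω e1 e2
      rw [abs_of_neg hl]
      nlinarith [e1, e2]
  · -- (2) seminorm inequalities
    have A1 : ∀ᵐ ω ∂P, MXY ω ≤ MX ω - mY ω := by
      refine hMXY.2.2.2 (fun ω => MX ω - mY ω) (hMX.1.sub hmYmeas) ?_
      filter_upwards [hXleMX, hmYleY] with ω h1 h2
      linarith
    have A2 : ∀ᵐ ω ∂P, -mXY ω ≤ MY ω - mX ω := by
      refine hmXY.2.2.2 (fun ω => MY ω - mX ω) (hMY.1.sub hmXmeas) ?_
      filter_upwards [hYleMY, hmXleX] with ω h1 h2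
      linarith
    have B1 : ∀ᵐ ω ∂P, MX ω ≤ MXY ω + MY ω := by
      refine hMX.2.2.2 (fun ω => MXY ω + MY ω) (hMXY.1.add hMY.1) ?_
      filter_upwards [hMXY.2.2.1, hYleMY] with ω h1 h2
      linarith
    have B2 : ∀ᵐ ω ∂P, -mX ω ≤ -mXY ω + -mY ω := by
      refine hmX.2.2.2 (fun ω => -mXY ω + -mY ω) (hmXY.1.add hmY.1) ?_
      filter_upwards [hmXY.2.2.1, hmY.2.2.1] with ω h1 h2
      linarith
    filter_upwards [A1, A2, B1, B2] with ω a1 a2 b1 b2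
    constructor <;> linarith
  · -- (3) positive/negative parts
    have hp1 : Mp =ᵐ[P] fun ω => max (MX ω) 0 :=
      condEssSup_unique (Eventually.of_forall fun ω => rfl) hMp (condEssSup_max hMX)
    have hp2 : (fun ω => -mp ω) =ᵐ[P] fun ω => min (-mX ω) 0 :=
      condEssSup_unique
        (Eventually.of_forall fun ω => by rw [← min_neg_neg, neg_zero])
        hmp (condEssSup_min hXneg hmX)
    have hn1 : Mn =ᵐ[P] fun ω => max (-mX ω) 0 :=
      condEssSup_unique (Eventually.of_forall fun ω => rfl) hMn (condEssSup_max hmX)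
    have hn2 : (fun ω => -mn ω) =ᵐ[P] fun ω => min (MX ω) 0 :=
      condEssSup_unique
        (Eventually.of_forall fun ω => by rw [← min_neg_neg, neg_zero, neg_neg])
        hmn (condEssSup_min hX hMX)
    filter_upwards [hp1, hp2, hn1, hn2] with ω e1 e2 e3 e4
    have key : ∀ a : ℝ, max a 0 - max (-a) 0 = a := fun a => by
      rcases le_total a 0 with h | h
      · rw [max_eq_right h, max_eq_left (neg_nonneg.2 h)]; ring
      · rw [max_eq_left h, max_eq_right (neg_nonpos.2 h)]; ring
    have k1 := key (MX ω)
    have k2 := key (-mX ω)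
    have e2' : mp ω = max (mX ω) 0 := by
      have : -mp ω = -max (mX ω) 0 := by
        rw [e2, ← min_neg_neg, neg_zero]
      linarith
    have e4' : mn ω = max (-MX ω) 0 := by
      have : -mn ω = -max (-MX ω) 0 := by
        rw [e4, ← min_neg_neg, neg_zero, neg_neg]
      linarith
    rw [e1, e2', e3, e4']
    rw [neg_neg] at k2
    linarith
  · -- (4) nonnegativity
    filter_upwards [hXleMX, hmXleX] with ω h1 h2
    linarith
  · -- (5) characterization of δ = 0
    constructor
    · intro h
      refine ⟨MX, hMX.1, ?_⟩
      filter_upwards [h, hXleMX, hmXleX] with ω h0 h1 h2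
      linarith
    · rintro ⟨Z, hZm, hXZ⟩
      have hMXleZ : ∀ᵐ ω ∂P, MX ω ≤ Z ω := by
        refine hMX.2.2.2 Z hZm ?_
        filter_upwards [hXZ] with ω h; exact le_of_eq h
      have hmZleX : ∀ᵐ ω ∂P, -mX ω ≤ -Z ω := by
        refine hmX.2.2.2 (fun ω => -Z ω) hZm.neg ?_
        filter_upwards [hXZ] with ω h
        rw [h]
      filter_upwards [hMXleZ, hmZleX, hXZ, hXleMX, hmXleX] with ω h1 h2 h3 h4 h5
      linarith [h3 ▸ h4, h3 ▸ h5]
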